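/- If A and B are computably inseparable computably enumerable subsets of ℕ (disjoint c.e. sets with no computable set C ⊇ A with C ∩ B = ∅), then no computable set separates them; in particular, there exist disjoint c.e. sets A, B such that no computable C satisfies A ⊆ C and C ∩ B = ∅. -/

import Mathlib

open Nat.Partrec (Code)
open Nat.Partrec.Code

private noncomputable def stmtG : ℕ →. ℕ :=
  fun e => eval (Denumerable.ofNat Code e) e

private theorem stmtG_partrec : Partrec stmtG :=
  eval_part.comp (Computable.ofNat _) Computable.id

private theorem stmt_re (k : ℕ) : REPred fun e => k ∈ stmtG e := by
  have hq : Computable fun x : (ℕ × ℕ) × ℕ => decide (x.1.2 = k) :=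
    Primrec.to_comp (Primrec.eq.comp (Primrec.snd.comp Primrec.fst) (Primrec.const k)).decide
  have hq2 : Partrec₂ fun (p : ℕ × ℕ) (n : ℕ) => (Part.some (decide (p.2 = k)) : Part Bool) :=
    hq.partrec
  have hr : Partrec fun p : ℕ × ℕ =>
      Nat.rfind fun n => (Part.some (decide (p.2 = k)) : Part Bool) :=
    Partrec.rfind hq2
  have hp : Partrec fun e =>
      (stmtG e).bind fun m => Nat.rfind fun _ => (Part.some (decide (m = k)) : Part Bool) :=
    stmtG_partrec.bind hr.to₂
  refine hp.dom_re.of_eq fun e => ?_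
  simp only [Part.bind_dom]
  constructor
  · rintro ⟨hdom, hr⟩
    obtain ⟨n, hn, -⟩ := Nat.rfind_dom.1 hr
    simp only [Part.mem_some_iff] at hn
    have hg : (stmtG e).get hdom = k := by simpa using hn.symm
    exact hg ▸ Part.get_mem hdom
  · intro hk
    have hdom : (stmtG e).Dom := Part.dom_iff_mem.2 ⟨k, hk⟩
    refine ⟨hdom, Nat.rfind_dom.2 ⟨0, ?_, fun {m} _ => trivial⟩⟩
    simp [Part.get_eq_of_mem hk hdom]

theorem stmt_16 : ∃ A B : ℕ → Prop, REPred A ∧ REPred B ∧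
    (∀ n, ¬ (A n ∧ B n)) ∧
    ∀ C : ℕ → Prop, ComputablePred C →
      ¬ ((∀ n, A n → C n) ∧ (∀ n, C n → ¬ B n)) := by
  classical
  refine ⟨fun e => 0 ∈ stmtG e, fun e => 1 ∈ stmtG e, stmt_re 0, stmt_re 1, ?_, ?_⟩
  · rintro n ⟨h0, h1⟩
    exact absurd (Part.mem_unique h0 h1) (by decide)
  · rintro C hC ⟨hAC, hCB⟩
    obtain ⟨inst, hcomp⟩ := hC
    have hf : Computable fun n => if C n then 1 else 0 := by
      have := Computable.cond hcomp (Computable.const 1) (Computable.const 0)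
      refine this.of_eq fun n => ?_
      by_cases h : C n <;> simp [h]
    obtain ⟨c, hc⟩ := exists_code.1 (Partrec.nat_iff.1 hf.partrec)
    set e := Encodable.encode c with he
    have hge : stmtG e = Part.some (if C e then 1 else 0) := by
      simp only [stmtG, he, Denumerable.ofNat_encode, hc]
      rfl
    by_cases h : C e
    · apply hCB e h
      rw [hge, if_pos h]
      exact Part.mem_some 1
    · apply h
      apply hAC e
      rw [hge, if_neg h]
      exact Part.mem_some 0
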